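/- Every skew PBW extension A of a ring R with variables x_1, …, x_n is a finitely semi-graded ring. Explicitly, setting A_p := ⊕_{|α| = p} R x^α (the free left R-submodule spanned by the standard monomials of total degree p), one has: A = ⊕_{p≥0} A_p as an internal direct sum of additive subgroups; 1 ∈ A_0 = R; A_m · A_n ⊆ A_0 ⊕ A_1 ⊕ ⋯ ⊕ A_{m+n} for all m, n ≥ 0; A is generated as a ring by A_0 together with the finitely many elements x_1, …, x_n; and each A_p is a free left A_0-module of finite rank. -/

import Mathlib

/-- The standard monomial `x^α = x₁^{α₁} ⋯ xₙ^{αₙ}` (ordered product). -/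
def stdMon {A : Type*} [Ring A] {n : ℕ} (x : Fin n → A) (α : Fin n → ℕ) : A :=
  (List.ofFn fun i => x i ^ α i).prod

/-- `A` is a skew PBW extension of `R` (embedded via `φ`) with variables `x₁,…,xₙ`. -/
def IsSkewPBWExt {R A : Type*} [Ring R] [Ring A] {n : ℕ} (φ : R →+* A) (x : Fin n → A) :
    Prop :=
  Function.Injective φ ∧
  (letI : Module R A := Module.compHom A φ;
    LinearIndependent R (stdMon x) ∧
      Submodule.span R (Set.range (stdMon x)) = (⊤ : Submodule R A)) ∧
  (∀ i : Fin n, ∀ r : R, r ≠ 0 → ∃ c : R, c ≠ 0 ∧ ∃ s : R,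
      x i * φ r - φ c * x i = φ s) ∧
  (∀ i j : Fin n, ∃ c : R, c ≠ 0 ∧ ∃ s : R, ∃ t : Fin n → R,
      x j * x i - φ c * (x i * x j) = φ s + ∑ k, φ (t k) * x k)

/-- The homogeneous part `A_p := ⊕_{|α| = p} R·x^α` of a skew PBW extension. -/
def pbwGrade {R A : Type*} [Ring R] [Ring A] {n : ℕ} (φ : R →+* A) (x : Fin n → A)
    (p : ℕ) : AddSubgroup A :=
  AddSubgroup.closure {a | ∃ (r : R) (α : Fin n → ℕ), (∑ i, α i) = p ∧ a = φ r * stdMon x α}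

/-! ### Auxiliary lemmas -/

lemma stdMon_zero {A : Type*} [Ring A] {n : ℕ} (x : Fin n → A) : stdMon x 0 = 1 := by
  simp [stdMon]

lemma stdMon_succ {A : Type*} [Ring A] {m : ℕ} (x : Fin (m+1) → A) (α : Fin (m+1) → ℕ) :
    stdMon x α = x 0 ^ α 0 * stdMon (x ∘ Fin.succ) (α ∘ Fin.succ) := by
  simp [stdMon, List.ofFn_succ]

lemma x_mul_stdMon {A : Type*} [Ring A] : ∀ {n : ℕ} (x : Fin n → A) (i : Fin n)
    (α : Fin n → ℕ), (∀ j, j < i → α j = 0) →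
    x i * stdMon x α = stdMon x (α + Pi.single i 1) := by
  intro n
  induction n with
  | zero => exact fun _ i => i.elim0
  | succ m IH =>
    intro x i α
    induction i using Fin.cases with
    | zero =>
      intro h0
      rw [stdMon_succ, stdMon_succ, ← mul_assoc, ← pow_succ']
      congr 2
    | succ k =>
      intro h0
      have h00 : α 0 = 0 := h0 0 (Fin.succ_pos k)
      rw [stdMon_succ, stdMon_succ, h00, pow_zero, one_mul]
      have hIH := IH (x ∘ Fin.succ) k (α ∘ Fin.succ) (fun j hji =>
        h0 j.succ (by simpa using hji))
      rw [show (x ∘ Fin.succ) k = x k.succ from rfl] at hIH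
      rw [hIH]
      have hα0 : (α + Pi.single k.succ 1 : Fin (m+1) → ℕ) 0 = 0 := by
        simp [Pi.single_apply, (Fin.succ_ne_zero _).symm, h00]
      rw [hα0, pow_zero, one_mul]
      congr 1
      funext j
      simp only [Pi.add_apply, Function.comp_apply, Pi.single_apply]
      simp only [Fin.succ_inj]

lemma sum_add_single {n : ℕ} (α : Fin n → ℕ) (i : Fin n) :
    (∑ k, (α + Pi.single i 1 : Fin n → ℕ) k) = (∑ k, α k) + 1 := by
  simp [Finset.sum_add_distrib, Pi.single_apply]

lemma stdMon_split {A : Type*} [Ring A] {n : ℕ} (x : Fin n → A) (α : Fin n → ℕ)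
    (k : Fin n) (hk : α k ≠ 0) :
    ∃ (j : Fin n) (α' : Fin n → ℕ), j ≤ k ∧ (∑ i, α' i) + 1 = ∑ i, α i ∧
      stdMon x α = x j * stdMon x α' ∧ ∀ l, l < j → α' l = 0 := by
  classical
  have hex : ∃ m, ∃ h : m < n, α ⟨m, h⟩ ≠ 0 := ⟨k.1, k.2, by simpa [Fin.eta] using hk⟩
  obtain ⟨hj0n, hαj⟩ := Nat.find_spec hex
  set j : Fin n := ⟨Nat.find hex, hj0n⟩ with hjdef
  have hjk : j ≤ k := by
    have := Nat.find_le (h := hex) (n := k.1) ⟨k.2, by simpa [Fin.eta] using hk⟩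
    simpa [Fin.le_def, hjdef] using this
  have hmin : ∀ l : Fin n, l < j → α l = 0 := by
    intro l hl
    by_contra hne
    exact Nat.find_min hex (by simpa [Fin.lt_def, hjdef] using hl)
      ⟨l.2, by simpa [Fin.eta] using hne⟩
  set α' : Fin n → ℕ := Function.update α j (α j - 1) with hα'def
  have hαjne : α j ≠ 0 := hαj
  have hadd : α' + Pi.single j 1 = α := by
    funext l
    by_cases hl : l = j
    · subst hl
      simp [hα'def, Pi.single_apply]
      omega
    · simp [hα'def, Pi.single_apply, hl, Function.update_of_ne hl]
  have hz' : ∀ l, l < j → α' l = 0 := by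
    intro l hl
    rw [hα'def, Function.update_of_ne (ne_of_lt hl)]
    exact hmin l hl
  refine ⟨j, α', hjk, ?_, ?_, hz'⟩
  · rw [← hadd, sum_add_single]
  · rw [x_mul_stdMon x j α' hz', hadd]

section PBWAux

variable {R A : Type*} [Ring R] [Ring A] {n : ℕ}

/-- The filtration `F_q = ⊕_{|α| ≤ q} R x^α`. -/
def pbwFil (φ : R →+* A) (x : Fin n → A) (q : ℕ) : AddSubgroup A :=
  AddSubgroup.closure {a | ∃ (r : R) (α : Fin n → ℕ), (∑ i, α i) ≤ q ∧ a = φ r * stdMon x α}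

variable (φ : R →+* A) (x : Fin n → A)

lemma mem_fil_gen (r : R) (α : Fin n → ℕ) {q : ℕ} (h : (∑ i, α i) ≤ q) :
    φ r * stdMon x α ∈ pbwFil φ x q :=
  AddSubgroup.subset_closure ⟨r, α, h, rfl⟩

lemma stdMon_mem_fil (α : Fin n → ℕ) {q : ℕ} (h : (∑ i, α i) ≤ q) :
    stdMon x α ∈ pbwFil φ x q := by
  simpa using mem_fil_gen φ x 1 α h

lemma fil_mono {q q' : ℕ} (h : q ≤ q') : pbwFil φ x q ≤ pbwFil φ x q' :=
  AddSubgroup.closure_mono (fun a ⟨r, α, hα, ha⟩ => ⟨r, α, le_trans hα h, ha⟩)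

lemma phi_mul_fil (r : R) {q : ℕ} {b : A} (hb : b ∈ pbwFil φ x q) :
    φ r * b ∈ pbwFil φ x q := by
  refine AddSubgroup.closure_induction (p := fun b _ => φ r * b ∈ pbwFil φ x q)
    ?_ (by simpa using (pbwFil φ x q).zero_mem) ?_ ?_ hb
  · rintro a ⟨r', α, hα, rfl⟩
    rw [← mul_assoc, ← map_mul]
    exact mem_fil_gen φ x _ α hα
  · intro a b _ _ ha hb; rw [mul_add]; exact add_mem ha hb
  · intro a _ ha; rw [mul_neg]; exact neg_mem ha

lemma phi_mul_grade (r : R) {p : ℕ} {b : A} (hb : b ∈ pbwGrade φ x p) :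
    φ r * b ∈ pbwGrade φ x p := by
  refine AddSubgroup.closure_induction (p := fun b _ => φ r * b ∈ pbwGrade φ x p)
    ?_ (by simpa using (pbwGrade φ x p).zero_mem) ?_ ?_ hb
  · rintro a ⟨r', α, hα, rfl⟩
    rw [← mul_assoc, ← map_mul]
    exact AddSubgroup.subset_closure ⟨r * r', α, hα, rfl⟩
  · intro a b _ _ ha hb; rw [mul_add]; exact add_mem ha hb
  · intro a _ ha; rw [mul_neg]; exact neg_mem ha

lemma x_mul_fil
    (hc : ∀ (i : Fin n) (r : R), ∃ c s : R, x i * φ r = φ c * x i + φ s)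
    (hqr : ∀ i j : Fin n, ∃ (c s : R) (t : Fin n → R),
      x i * x j = φ c * (x j * x i) + (φ s + ∑ k, φ (t k) * x k)) :
    ∀ (q : ℕ) (i : Fin n) (b : A), b ∈ pbwFil φ x q → x i * b ∈ pbwFil φ x (q + 1) := by
  intro q
  induction q using Nat.strong_induction_on with
  | _ q IHq =>
  suffices H : ∀ (m : ℕ) (i : Fin n), i.1 < m →
      ∀ b, b ∈ pbwFil φ x q → x i * b ∈ pbwFil φ x (q+1) by
    exact fun i b hb => H (i.1 + 1) i (Nat.lt_succ_self _) b hb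
  intro m
  induction m with
  | zero => omega
  | succ m IHm =>
    intro i him b hb
    refine AddSubgroup.closure_induction (p := fun b _ => x i * b ∈ pbwFil φ x (q+1))
      ?_ (by simpa using (pbwFil φ x (q+1)).zero_mem) ?_ ?_ hb
    · rintro a ⟨r, α, hα, rfl⟩
      obtain ⟨c, s, hcs⟩ := hc i r
      have key : x i * stdMon x α ∈ pbwFil φ x (q+1) := by
        by_cases hz : ∀ j, j < i → α j = 0
        · rw [x_mul_stdMon x i α hz]
          exact stdMon_mem_fil φ x _ (by rw [sum_add_single]; omega)
        · push_neg at hz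
          obtain ⟨k, hki, hk⟩ := hz
          obtain ⟨j, α', hjk, hsum, hsplit, hz'⟩ := stdMon_split x α k hk
          have hji : j < i := lt_of_le_of_lt hjk hki
          have hq1 : 1 ≤ q := by omega
          have hα' : (∑ i, α' i) ≤ q - 1 := by omega
          obtain ⟨c2, s2, t2, hrel⟩ := hqr i j
          have h1 : stdMon x α' ∈ pbwFil φ x (q-1) := stdMon_mem_fil φ x _ hα'
          have h2 : x i * stdMon x α' ∈ pbwFil φ x q := by
            have := IHq (q-1) (by omega) i _ h1
            rwa [Nat.sub_add_cancel hq1] at this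
          have h3 : x j * (x i * stdMon x α') ∈ pbwFil φ x (q+1) := by
            refine IHm j ?_ _ h2
            have := Fin.lt_def.mp hji
            omega
          have h4 : ∀ k' : Fin n, x k' * stdMon x α' ∈ pbwFil φ x (q+1) := by
            intro k'
            have := IHq (q-1) (by omega) k' _ h1
            exact fil_mono φ x (by omega) this
          have hcalc : x i * stdMon x α =
              φ c2 * (x j * (x i * stdMon x α')) +
                (φ s2 * stdMon x α' + ∑ k', φ (t2 k') * (x k' * stdMon x α')) := by
            rw [hsplit, ← mul_assoc, ← mul_assoc, hrel]
            simp [add_mul, Finset.sum_mul, mul_assoc]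
          rw [hcalc]
          refine add_mem (phi_mul_fil φ x _ h3) (add_mem ?_ (sum_mem fun k' _ =>
            phi_mul_fil φ x _ (h4 k')))
          exact mem_fil_gen φ x _ _ (by omega)
      have hcalc2 : x i * (φ r * stdMon x α) =
          φ c * (x i * stdMon x α) + φ s * stdMon x α := by
        rw [← mul_assoc, hcs, add_mul, mul_assoc]
      rw [hcalc2]
      exact add_mem (phi_mul_fil φ x _ key) (mem_fil_gen φ x _ _ (by omega))
    · intro a b _ _ ha hb; rw [mul_add]; exact add_mem ha hb
    · intro a _ ha; rw [mul_neg]; exact neg_mem ha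

lemma stdMon_mul_fil
    (hc : ∀ (i : Fin n) (r : R), ∃ c s : R, x i * φ r = φ c * x i + φ s)
    (hqr : ∀ i j : Fin n, ∃ (c s : R) (t : Fin n → R),
      x i * x j = φ c * (x j * x i) + (φ s + ∑ k, φ (t k) * x k)) :
    ∀ (d : ℕ) (α : Fin n → ℕ), (∑ i, α i) = d → ∀ (q : ℕ) (b : A), b ∈ pbwFil φ x q →
      stdMon x α * b ∈ pbwFil φ x (q + d) := by
  intro d
  induction d using Nat.strong_induction_on with
  | _ d IHd =>
  intro α hα q b hb
  rcases Nat.eq_zero_or_pos d with hd | hd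
  · subst hd
    have : α = 0 := by
      funext i
      have := Finset.sum_eq_zero_iff.mp hα i (Finset.mem_univ i)
      simpa using this
    rw [this, stdMon_zero, one_mul]
    simpa using hb
  · have : ∃ k, α k ≠ 0 := by
      by_contra hcon
      push_neg at hcon
      have : (∑ i, α i) = 0 := Finset.sum_eq_zero fun i _ => hcon i
      omega
    obtain ⟨k, hk⟩ := this
    obtain ⟨j, α', _, hsum, hsplit, _⟩ := stdMon_split x α k hk
    have h1 : stdMon x α' * b ∈ pbwFil φ x (q + (d-1)) :=
      IHd (d-1) (by omega) α' (by omega) q b hb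
    have h2 := x_mul_fil φ x hc hqr (q + (d-1)) j _ h1
    rw [hsplit, mul_assoc]
    have heq : q + (d - 1) + 1 = q + d := by omega
    rwa [heq] at h2

lemma grade_le_fil {p q : ℕ} (h : p ≤ q) : pbwGrade φ x p ≤ pbwFil φ x q :=
  AddSubgroup.closure_mono fun a ⟨r, α, hα, ha⟩ => ⟨r, α, by omega, ha⟩

lemma fil_eq_iSup (q : ℕ) : pbwFil φ x q = ⨆ i ∈ Finset.Iic q, pbwGrade φ x i := by
  apply le_antisymm
  · rw [pbwFil, AddSubgroup.closure_le]
    rintro a ⟨r, α, hα, rfl⟩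
    have hmem : φ r * stdMon x α ∈ pbwGrade φ x (∑ i, α i) :=
      AddSubgroup.subset_closure ⟨r, α, rfl, rfl⟩
    exact (le_iSup₂ (f := fun i (_ : i ∈ Finset.Iic q) => pbwGrade φ x i)
      (∑ i, α i) (Finset.mem_Iic.mpr hα)) hmem
  · exact iSup₂_le fun i hi => grade_le_fil φ x (Finset.mem_Iic.mp hi)

section ModulePart
variable [Module R A]

lemma mem_grade_iff (hsm : ∀ (r : R) (a : A), r • a = φ r * a) (p : ℕ) (a : A) :
    a ∈ pbwGrade φ x p ↔ a ∈ Submodule.span R (stdMon x '' {α | (∑ i, α i) = p}) := by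
  constructor
  · intro ha
    refine AddSubgroup.closure_induction
      (p := fun a _ => a ∈ Submodule.span R (stdMon x '' {α | (∑ i, α i) = p}))
      ?_ (Submodule.zero_mem _) (fun _ _ _ _ => add_mem) (fun _ _ => neg_mem) ha
    rintro a ⟨r, α, hα, rfl⟩
    rw [← hsm]
    exact Submodule.smul_mem _ r (Submodule.subset_span ⟨α, hα, rfl⟩)
  · intro ha
    refine Submodule.span_induction ?_ (zero_mem _) (fun _ _ _ _ => add_mem) ?_ ha
    · rintro a ⟨α, hα, rfl⟩
      exact AddSubgroup.subset_closure ⟨1, α, hα, by simp⟩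
    · intro r a _ hmem
      rw [hsm]
      exact phi_mul_grade φ x r hmem

lemma grade_eq_toAddSubgroup (hsm : ∀ (r : R) (a : A), r • a = φ r * a) (p : ℕ) :
    pbwGrade φ x p = (Submodule.span R (stdMon x '' {α | (∑ i, α i) = p})).toAddSubgroup := by
  ext a
  rw [mem_grade_iff φ x hsm p a]
  rfl

end ModulePart

end PBWAux

/-- Theorem: every skew PBW extension is a finitely semi-graded ring, with semi-graduation
`A_p = ⊕_{|α| = p} R x^α`. -/
theorem stmt4 {R A : Type*} [Ring R] [Ring A] {n : ℕ} (φ : R →+* A) (x : Fin n → A)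
    (h : IsSkewPBWExt φ x) :
    -- A = ⊕_{p ≥ 0} A_p internally
    DirectSum.IsInternal (pbwGrade φ x) ∧
    -- 1 ∈ A_0 = R
    (1 : A) ∈ pbwGrade φ x 0 ∧
    (pbwGrade φ x 0 : Set A) = Set.range φ ∧
    -- A_m · A_p ⊆ A_0 ⊕ ⋯ ⊕ A_{m+p}
    (∀ m p : ℕ, ∀ a ∈ pbwGrade φ x m, ∀ b ∈ pbwGrade φ x p,
        a * b ∈ ⨆ i ∈ Finset.Iic (m + p), pbwGrade φ x i) ∧
    -- A is generated as a ring by A_0 and x₁,…,xₙ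
    Subring.closure ((pbwGrade φ x 0 : Set A) ∪ Set.range x) = (⊤ : Subring A) ∧
    -- each A_p is a free left A_0 = R module of finite rank
    (∀ p : ℕ, ∃ (N : ℕ) (b : Fin N → A),
        (∀ k, b k ∈ pbwGrade φ x p) ∧
        Function.Injective (fun t : Fin N → R => ∑ k, φ (t k) * b k) ∧
        ∀ a ∈ pbwGrade φ x p, ∃ t : Fin N → R, a = ∑ k, φ (t k) * b k) := by
  classical
  letI : Module R A := Module.compHom A φ
  have hsm : ∀ (r : R) (a : A), r • a = φ r * a := fun _ _ => rfl
  obtain ⟨hinj, ⟨hli, hspan⟩, hscal, hquad⟩ := h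
  -- normalized commutation relations
  have hc : ∀ (i : Fin n) (r : R), ∃ c s : R, x i * φ r = φ c * x i + φ s := by
    intro i r
    by_cases hr : r = 0
    · exact ⟨0, 0, by simp [hr]⟩
    · obtain ⟨c, _, s, hcs⟩ := hscal i r hr
      exact ⟨c, s, by rw [← hcs]; abel⟩
  have hqr : ∀ i j : Fin n, ∃ (c s : R) (t : Fin n → R),
      x i * x j = φ c * (x j * x i) + (φ s + ∑ k, φ (t k) * x k) := by
    intro i j
    obtain ⟨c, _, s, t, hrel⟩ := hquad j i
    exact ⟨c, s, t, by rw [← hrel]; abel⟩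
  -- Part 1 : internal direct sum
  have hgr : pbwGrade φ x = fun p =>
      (Submodule.span R (stdMon x '' {α | (∑ i, α i) = p})).toAddSubgroup :=
    funext fun p => grade_eq_toAddSubgroup φ x hsm p
  have part1 : DirectSum.IsInternal (pbwGrade φ x) := by
    rw [hgr]
    have hindep : iSupIndep (fun p => Submodule.span R (stdMon x '' {α | (∑ i, α i) = p})) := by
      rw [iSupIndep_def]
      intro p
      have h1 : (⨆ (j) (_ : j ≠ p), Submodule.span R (stdMon x '' {α | (∑ i, α i) = j})) ≤
          Submodule.span R (stdMon x '' {α | (∑ i, α i) ≠ p}) := by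
        refine iSup₂_le fun j hj => Submodule.span_mono (Set.image_mono ?_)
        intro α hα
        simp only [Set.mem_setOf_eq] at *
        omega
      refine Disjoint.mono_right h1 (hli.disjoint_span_image ?_)
      rw [Set.disjoint_left]
      intro α h1' h2'
      exact h2' h1'
    have hsup : (⨆ p, Submodule.span R (stdMon x '' {α | (∑ i, α i) = p})) = ⊤ := by
      rw [eq_top_iff, ← hspan, Submodule.span_le]
      rintro _ ⟨α, rfl⟩
      exact SetLike.mem_coe.mpr (Submodule.mem_iSup_of_mem (∑ i, α i)
        (Submodule.subset_span ⟨α, rfl, rfl⟩))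
    exact DirectSum.isInternal_submodule_of_iSupIndep_of_iSup_eq_top hindep hsup
  -- Part 2
  have part2 : (1 : A) ∈ pbwGrade φ x 0 :=
    AddSubgroup.subset_closure ⟨1, 0, by simp, by simp [stdMon_zero]⟩
  -- Part 3
  have part3 : (pbwGrade φ x 0 : Set A) = Set.range φ := by
    apply Set.Subset.antisymm
    · intro a ha
      simp only [SetLike.mem_coe] at ha
      refine AddSubgroup.closure_induction (p := fun a _ => a ∈ Set.range φ)
        ?_ ⟨0, by simp⟩ ?_ ?_ ha
      · rintro a ⟨r, α, hα, rfl⟩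
        have hα0 : α = 0 := funext fun i => by
          simpa using Finset.sum_eq_zero_iff.mp hα i (Finset.mem_univ i)
        exact ⟨r, by simp [hα0, stdMon_zero]⟩
      · rintro a b _ _ ⟨r, rfl⟩ ⟨r', rfl⟩; exact ⟨r + r', by simp⟩
      · rintro a _ ⟨r, rfl⟩; exact ⟨-r, by simp⟩
    · rintro _ ⟨r, rfl⟩
      exact AddSubgroup.subset_closure ⟨r, 0, by simp, by simp [stdMon_zero]⟩
  -- Part 4
  have part4 : ∀ m p : ℕ, ∀ a ∈ pbwGrade φ x m, ∀ b ∈ pbwGrade φ x p,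
      a * b ∈ ⨆ i ∈ Finset.Iic (m + p), pbwGrade φ x i := by
    intro m p a ha b hb
    rw [← fil_eq_iSup]
    have hbf : b ∈ pbwFil φ x p := grade_le_fil φ x le_rfl hb
    refine AddSubgroup.closure_induction (p := fun a _ => a * b ∈ pbwFil φ x (m+p))
      ?_ (by simpa using (pbwFil φ x (m+p)).zero_mem) ?_ ?_ ha
    · rintro a ⟨r, α, hα, rfl⟩
      rw [mul_assoc]
      refine phi_mul_fil φ x r ?_
      have := stdMon_mul_fil φ x hc hqr (∑ i, α i) α rfl p b hbf
      rwa [hα, Nat.add_comm] at this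
    · intro a a' _ _ h1 h2; rw [add_mul]; exact add_mem h1 h2
    · intro a _ h1; rw [neg_mul]; exact neg_mem h1
  -- Part 5
  have part5 : Subring.closure ((pbwGrade φ x 0 : Set A) ∪ Set.range x) = (⊤ : Subring A) := by
    rw [eq_top_iff]
    intro a _
    have ha : a ∈ Submodule.span R (Set.range (stdMon x)) := by rw [hspan]; trivial
    refine Submodule.span_induction ?_ (zero_mem _) (fun _ _ _ _ => add_mem) ?_ ha
    · rintro _ ⟨α, rfl⟩
      refine Subring.list_prod_mem _ ?_
      intro a ha'
      rw [List.mem_ofFn] at ha'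
      obtain ⟨i, rfl⟩ := ha'
      have hxi : x i ∈ Subring.closure ((pbwGrade φ x 0 : Set A) ∪ Set.range x) :=
        Subring.subset_closure (Or.inr ⟨i, rfl⟩)
      exact pow_mem hxi (α i)
    · intro r a _ hmem
      rw [hsm]
      refine mul_mem (Subring.subset_closure (Or.inl ?_)) hmem
      exact AddSubgroup.subset_closure ⟨r, 0, by simp, by simp [stdMon_zero]⟩
  -- Part 6
  have part6 : ∀ p : ℕ, ∃ (N : ℕ) (b : Fin N → A),
      (∀ k, b k ∈ pbwGrade φ x p) ∧
      Function.Injective (fun t : Fin N → R => ∑ k, φ (t k) * b k) ∧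
      ∀ a ∈ pbwGrade φ x p, ∃ t : Fin N → R, a = ∑ k, φ (t k) * b k := by
    intro p
    set S : Finset (Fin n → ℕ) :=
      (Fintype.piFinset fun _ : Fin n => Finset.range (p+1)).filter
        (fun α => (∑ i, α i) = p) with hS
    have hSmem : ∀ α : Fin n → ℕ, α ∈ S ↔ (∑ i, α i) = p := by
      intro α
      simp only [hS, Finset.mem_filter, Fintype.mem_piFinset, Finset.mem_range]
      constructor
      · exact fun h' => h'.2
      · intro h'
        refine ⟨fun i => ?_, h'⟩
        have : α i ≤ ∑ j, α j :=
          Finset.single_le_sum (fun _ _ => Nat.zero_le _) (Finset.mem_univ i)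
        omega
    set e := S.equivFin with he
    set b : Fin S.card → A := fun k => stdMon x ((e.symm k : S) : Fin n → ℕ) with hb
    have hrange : stdMon x '' {α | (∑ i, α i) = p} = Set.range b := by
      ext a
      constructor
      · rintro ⟨α, hα, rfl⟩
        refine ⟨e ⟨α, (hSmem α).mpr hα⟩, ?_⟩
        simp only [hb, Equiv.symm_apply_apply]
      · rintro ⟨k, rfl⟩
        exact ⟨_, (hSmem _).mp (e.symm k).2, rfl⟩
    refine ⟨S.card, b, ?_, ?_, ?_⟩
    · intro k
      exact AddSubgroup.subset_closure ⟨1, _, (hSmem _).mp (e.symm k).2, by simp [hb]⟩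
    · have hinj2 : Function.Injective (fun k : Fin S.card => ((e.symm k : S) : Fin n → ℕ)) :=
        fun a b' hab => e.symm.injective (Subtype.ext hab)
      have hli2 : LinearIndependent R b := hli.comp _ hinj2
      intro t t' htt
      simp only at htt
      have hsum : ∑ k, (t k - t' k) • b k = 0 := by
        simp only [sub_smul, Finset.sum_sub_distrib]
        simp only [hsm]
        rw [htt, sub_self]
      have hz := Fintype.linearIndependent_iff.mp hli2 _ hsum
      funext k
      have := hz k
      rwa [sub_eq_zero] at this
    · intro a ha
      have ha' : a ∈ Submodule.span R (Set.range b) := by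
        rw [← hrange]
        exact (mem_grade_iff φ x hsm p a).mp ha
      obtain ⟨t, ht⟩ := (Submodule.mem_span_range_iff_exists_fun R).mp ha'
      refine ⟨t, ?_⟩
      rw [← ht]
      exact (Finset.sum_congr rfl fun k _ => (hsm _ _).symm).symm
  exact ⟨part1, part2, part3, part4, part5, part6⟩
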